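/- arXiv:2508.20841 — 3 statements merged into one kernel-verified Lean document; each statement's English description precedes it below -/
import Mathlib

section
/- Let n ≥ 1. For every ε > 0 there exist μ ∈ (0,1) and δ ∈ (0,1), depending only on ε and n, such that the following holds. Let v : ℝⁿ → ℝ be Lipschitz on B₂ with Lipschitz constant at most 1 (so v is differentiable at Lebesgue-almost every point of B₂, with |Dv| ≤ 1 a.e.), and v(0) = 0. If for some e ∈ ℝⁿ with |e| = 1 the Lebesgue measure of {x ∈ B₁ : v is differentiable at x and Dv(x) · e ≤ δ} is at most μ · |B₁|, then there exist a ∈ [−1, 1] and ξ ∈ ℝⁿ with |ξ| = 1 such that sup_{x ∈ B₁} |v(x) − (a + ξ · x)| ≤ ε. -/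
open Metric MeasureTheory Filter Set
open scoped RealInnerProductSpace Topology NNReal ENNReal

theorem lipschitzWith_sub_eq_integral_deriv {K : ℝ≥0} {G : ℝ → ℝ}
    (hG : LipschitzWith K G) {a b : ℝ} (hab : a ≤ b) :
    G b - G a = ∫ t in Set.Ioc a b, deriv G t := by
  have hGdist : ∀ x y : ℝ, |G x - G y| ≤ K * |x - y| := by
    intro x y
    have := hG.dist_le_mul x y
    rwa [Real.dist_eq, Real.dist_eq] at this
  set f₁ : ℝ → ℝ := fun x => G x + K * x with hf₁
  set f₂ : ℝ → ℝ := fun x => K * x - G x with hf₂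
  have hm₁ : Monotone f₁ := by
    intro x y hxy
    have h := (abs_le.1 (hGdist x y)).2
    have : |x - y| = y - x := by rw [abs_of_nonpos (by linarith)]; ring
    simp only [hf₁]
    nlinarith [this ▸ h]
  have hm₂ : Monotone f₂ := by
    intro x y hxy
    have h := (abs_le.1 (hGdist y x)).2
    have : |y - x| = y - x := abs_of_nonneg (by linarith)
    simp only [hf₂]
    nlinarith [this ▸ h]
  have hc₁ : Continuous f₁ := hG.continuous.add (continuous_const.mul continuous_id)
  have hc₂ : Continuous f₂ := (continuous_const.mul continuous_id).sub hG.continuous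
  set μ₁ := hm₁.stieltjesFunction.measure with hμ₁
  set μ₂ := hm₂.stieltjesFunction.measure with hμ₂
  have hst₁ : ∀ x, hm₁.stieltjesFunction x = f₁ x := by
    intro x
    rw [hm₁.stieltjesFunction_eq]
    exact rightLim_eq_of_tendsto
      ((hc₁.tendsto x).mono_left nhdsWithin_le_nhds)
  have hst₂ : ∀ x, hm₂.stieltjesFunction x = f₂ x := by
    intro x
    rw [hm₂.stieltjesFunction_eq]
    exact rightLim_eq_of_tendsto
      ((hc₂.tendsto x).mono_left nhdsWithin_le_nhds)
  have hIoc₁ : μ₁ (Set.Ioc a b) = ENNReal.ofReal (f₁ b - f₁ a) := by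
    rw [hμ₁, StieltjesFunction.measure_Ioc, hst₁, hst₁]
  have hIoc₂ : μ₂ (Set.Ioc a b) = ENNReal.ofReal (f₂ b - f₂ a) := by
    rw [hμ₂, StieltjesFunction.measure_Ioc, hst₂, hst₂]
  set d₁ : ℝ → ℝ := fun x => (μ₁.rnDeriv volume x).toReal with hd₁def
  set d₂ : ℝ → ℝ := fun x => (μ₂.rnDeriv volume x).toReal with hd₂def
  have hae₁ : ∀ᵐ x, HasDerivAt f₁ (d₁ x) x := hm₁.ae_hasDerivAt
  have hae₂ : ∀ᵐ x, HasDerivAt f₂ (d₂ x) x := hm₂.ae_hasDerivAt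
  -- a.e., `G` has derivative `d₁ x - K` and `d₁ x + d₂ x = 2 K`.
  have haeG : ∀ᵐ x, HasDerivAt G (d₁ x - K) x ∧ d₁ x + d₂ x = 2 * K := by
    filter_upwards [hae₁, hae₂] with x h₁ h₂
    have hlin : HasDerivAt (fun y : ℝ => (K : ℝ) * y) K x := by
      simpa using (hasDerivAt_id x).const_mul (K : ℝ)
    have hGd : HasDerivAt G (d₁ x - K) x := by
      have := h₁.sub hlin
      simpa [hf₁, Pi.sub_def] using this
    refine ⟨hGd, ?_⟩
    have hGd' : HasDerivAt G (K - d₂ x) x := by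
      have := hlin.sub h₂
      simpa [hf₂, Pi.sub_def] using this
    have := hGd.unique hGd'
    linarith
  have hd₁meas : Measurable d₁ := (Measure.measurable_rnDeriv μ₁ volume).ennreal_toReal
  have hd₂meas : Measurable d₂ := (Measure.measurable_rnDeriv μ₂ volume).ennreal_toReal
  have hd₁nonneg : ∀ x, 0 ≤ d₁ x := fun x => ENNReal.toReal_nonneg
  have hd₂nonneg : ∀ x, 0 ≤ d₂ x := fun x => ENNReal.toReal_nonneg
  have hd₁bdd : ∀ᵐ x, |d₁ x| ≤ 2 * K := by
    filter_upwards [haeG] with x hx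
    rw [abs_of_nonneg (hd₁nonneg x)]
    nlinarith [hd₂nonneg x, hx.2]
  -- integrability of `d₁` on `Ioc a b`
  have hint₁ : IntegrableOn d₁ (Set.Ioc a b) := by
    refine Integrable.mono' (integrable_const (2 * (K:ℝ))) 
      (hd₁meas.aestronglyMeasurable.restrict) ?_
    exact ae_restrict_of_ae (by simpa using hd₁bdd)
  -- bound 1 : `∫ d₁ ≤ f₁ b - f₁ a`
  have hb₁ : ∫ t in Set.Ioc a b, d₁ t ≤ f₁ b - f₁ a := by
    have hne : μ₁ (Set.Ioc a b) ≠ ∞ := by rw [hIoc₁]; exact ENNReal.ofReal_ne_top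
    have := MeasureTheory.Measure.setIntegral_toReal_rnDeriv_le (ν := volume) hne
    rw [measureReal_def, hIoc₁, ENNReal.toReal_ofReal (by have := hm₁ hab; linarith)] at this
    exact this
  have hb₂ : ∫ t in Set.Ioc a b, d₂ t ≤ f₂ b - f₂ a := by
    have hne : μ₂ (Set.Ioc a b) ≠ ∞ := by rw [hIoc₂]; exact ENNReal.ofReal_ne_top
    have := MeasureTheory.Measure.setIntegral_toReal_rnDeriv_le (ν := volume) hne
    rw [measureReal_def, hIoc₂, ENNReal.toReal_ofReal (by have := hm₂ hab; linarith)] at this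
    exact this
  -- rewrite `∫ deriv G` as `∫ d₁ - K (b - a)`
  have haed : ∀ᵐ x, deriv G x = d₁ x - K := by
    filter_upwards [haeG] with x hx using hx.1.deriv ▸ rfl
  have hKint : IntegrableOn (fun _ : ℝ => (K : ℝ)) (Set.Ioc a b) := integrable_const _
  have hIoc_vol : (volume (Set.Ioc a b)).toReal = b - a := by
    rw [Real.volume_Ioc, ENNReal.toReal_ofReal (by linarith)]
  have hderiv_int : ∫ t in Set.Ioc a b, deriv G t 
      = (∫ t in Set.Ioc a b, d₁ t) - K * (b - a) := by
    have h1 : ∫ t in Set.Ioc a b, deriv G t = ∫ t in Set.Ioc a b, (d₁ t - K) := by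
      refine integral_congr_ae (ae_restrict_of_ae ?_)
      filter_upwards [haed] with x hx using hx
    rw [h1, integral_sub hint₁ hKint, setIntegral_const, smul_eq_mul, measureReal_def, hIoc_vol, mul_comm]
  -- relation between the two integrals
  have hsum : ∫ t in Set.Ioc a b, d₂ t = 2 * K * (b - a) - ∫ t in Set.Ioc a b, d₁ t := by
    have h1 : ∫ t in Set.Ioc a b, d₂ t = ∫ t in Set.Ioc a b, (2 * (K:ℝ) - d₁ t) := by
      refine integral_congr_ae (ae_restrict_of_ae ?_)
      filter_upwards [haeG] with x hx
      linarith [hx.2]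
    rw [h1, integral_sub (integrable_const _) hint₁, setIntegral_const, smul_eq_mul, measureReal_def, hIoc_vol]; ring
  have e₁ : f₁ b - f₁ a = G b - G a + K * (b - a) := by simp only [hf₁]; ring
  have e₂ : f₂ b - f₂ a = K * (b - a) - (G b - G a) := by simp only [hf₂]; ring
  rw [hderiv_int]
  rw [e₁] at hb₁
  rw [e₂, hsum] at hb₂
  linarith

theorem segment_estimate {n : ℕ} {w : EuclideanSpace ℝ (Fin n) → ℝ}
    (hw : LipschitzWith 2 w) (y x' : EuclideanSpace ℝ (Fin n)) (hx' : ‖x'‖ ≤ 1)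
    {S : Set (EuclideanSpace ℝ (Fin n))} (hS : MeasurableSet S) {c : ℝ} (hc : 0 ≤ c)
    (h : ∀ t ∈ Set.Icc (0:ℝ) 1, y + t • x' ∉ S →
      DifferentiableAt ℝ w (y + t • x') ∧ |fderiv ℝ w (y + t • x') x'| ≤ c) :
    |w (y + x') - w y| ≤ c + 2 *
      (∫⁻ t in Set.Ioc (0:ℝ) 1,
        S.indicator (fun _ => (1:ℝ≥0∞)) (y + t • x')).toReal := by
  set φ : ℝ → EuclideanSpace ℝ (Fin n) := fun t => y + t • x' with hφ
  have hφcont : Continuous φ := by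
    exact continuous_const.add (continuous_id.smul continuous_const)
  have hφmeas : MeasurableSet (φ ⁻¹' S) := hS.preimage hφcont.measurable
  set G : ℝ → ℝ := fun t => w (φ t) with hGdef
  have hGlip : LipschitzWith 2 G := by
    apply LipschitzWith.of_dist_le_mul
    intro s t
    calc dist (G s) (G t) ≤ 2 * dist (φ s) (φ t) := hw.dist_le_mul _ _
    _ ≤ 2 * dist s t := by
        have : dist (φ s) (φ t) = ‖(s - t) • x'‖ := by
          rw [dist_eq_norm]; congr 1; simp only [hφ, sub_smul]; abel
        rw [this, norm_smul, Real.dist_eq]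
        have h1 : ‖s - t‖ * ‖x'‖ ≤ |s - t| * 1 := by
          rw [Real.norm_eq_abs]; exact mul_le_mul_of_nonneg_left hx' (abs_nonneg _)
        nlinarith [abs_nonneg (s-t)]
  -- pointwise bounds for `deriv G`
  have hbdd : ∀ t : ℝ, |deriv G t| ≤ 2 := by
    intro t
    by_cases hd : DifferentiableAt ℝ G t
    · have hnorm : ‖fderiv ℝ G t‖ ≤ 2 := by
        simpa using hd.hasFDerivAt.le_of_lipschitz hGlip
      have : deriv G t = fderiv ℝ G t 1 := by rw [fderiv_apply_one_eq_deriv]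
      rw [this]
      calc |fderiv ℝ G t 1| ≤ ‖fderiv ℝ G t‖ * ‖(1:ℝ)‖ := (fderiv ℝ G t).le_opNorm 1
      _ ≤ 2 := by simpa using hnorm
    · simp [deriv_zero_of_not_differentiableAt hd]
  have hptwise : ∀ t ∈ Set.Ioc (0:ℝ) 1,
      |deriv G t| ≤ c + 2 * (φ ⁻¹' S).indicator (fun _ => (1:ℝ)) t := by
    intro t ht
    by_cases hmem : φ t ∈ S
    · have : (φ ⁻¹' S).indicator (fun _ => (1:ℝ)) t = 1 := Set.indicator_of_mem (Set.mem_preimage.2 hmem) _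
      rw [this]
      linarith [hbdd t]
    · have hind : (φ ⁻¹' S).indicator (fun _ => (1:ℝ)) t = 0 := Set.indicator_of_notMem (fun hh => hmem (Set.mem_preimage.1 hh)) _
      obtain ⟨hdw, hfb⟩ := h t ⟨le_of_lt ht.1, ht.2⟩ hmem
      have hline : HasDerivAt φ x' t := by
        have h1 : HasDerivAt (fun s : ℝ => s • x') ((1:ℝ) • x') t :=
          (hasDerivAt_id t).smul_const x'
        simpa [hφ] using h1.const_add y
      have hGd : HasDerivAt G (fderiv ℝ w (φ t) x') t := by
        exact (hdw.hasFDerivAt.comp_hasDerivAt t hline)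
      rw [hGd.deriv, hind]
      simpa using hfb
  -- FTC
  have hftc : w (y + x') - w y = ∫ t in Set.Ioc (0:ℝ) 1, deriv G t := by
    have h0 : G 0 = w y := by simp [hGdef, hφ]
    have h1 : G 1 = w (y + x') := by simp [hGdef, hφ]
    rw [← h0, ← h1]
    exact lipschitzWith_sub_eq_integral_deriv hGlip zero_le_one
  -- integrability
  have hder_int : IntegrableOn (deriv G) (Set.Ioc (0:ℝ) 1) := by
    refine Integrable.mono' (integrable_const 2) ((measurable_deriv G).aestronglyMeasurable.restrict) ?_
    exact ae_restrict_of_ae (Filter.Eventually.of_forall fun t => by simpa using hbdd t)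
  have hind_int : IntegrableOn ((φ ⁻¹' S).indicator (fun _ => (1:ℝ))) (Set.Ioc (0:ℝ) 1) := by
    refine Integrable.mono' (integrable_const 1)
      ((measurable_one.indicator hφmeas).aestronglyMeasurable.restrict) ?_
    refine ae_restrict_of_ae (Filter.Eventually.of_forall fun t => ?_)
    rw [Real.norm_eq_abs]
    by_cases hmem : t ∈ φ ⁻¹' S <;> simp [Set.indicator_of_mem, Set.indicator_of_notMem, hmem]
  -- bound
  have hmono : |∫ t in Set.Ioc (0:ℝ) 1, deriv G t| ≤
      ∫ t in Set.Ioc (0:ℝ) 1, (c + 2 * (φ ⁻¹' S).indicator (fun _ => (1:ℝ)) t) := by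
    calc |∫ t in Set.Ioc (0:ℝ) 1, deriv G t| ≤ ∫ t in Set.Ioc (0:ℝ) 1, |deriv G t| := by
          simpa [Real.norm_eq_abs] using
            MeasureTheory.norm_integral_le_integral_norm (μ := volume.restrict (Set.Ioc (0:ℝ) 1))
              (deriv G)
    _ ≤ _ := by
        refine setIntegral_mono_on hder_int.abs ?_ measurableSet_Ioc hptwise
        exact (integrable_const c).add (hind_int.const_mul 2)
  have hsplit : ∫ t in Set.Ioc (0:ℝ) 1, (c + 2 * (φ ⁻¹' S).indicator (fun _ => (1:ℝ)) t)
      = c + 2 * ∫ t in Set.Ioc (0:ℝ) 1, (φ ⁻¹' S).indicator (fun _ => (1:ℝ)) t := by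
    rw [integral_add (integrable_const c) (hind_int.const_mul 2), setIntegral_const,
      MeasureTheory.integral_const_mul]
    simp [Real.volume_Ioc]
  -- identify the real integral of the indicator with the lintegral
  have hlint : ∫ t in Set.Ioc (0:ℝ) 1, (φ ⁻¹' S).indicator (fun _ => (1:ℝ)) t
      = (∫⁻ t in Set.Ioc (0:ℝ) 1, S.indicator (fun _ => (1:ℝ≥0∞)) (φ t)).toReal := by
    have heq : ∀ t : ℝ, S.indicator (fun _ => (1:ℝ≥0∞)) (φ t)
        = ENNReal.ofReal ((φ ⁻¹' S).indicator (fun _ => (1:ℝ)) t) := by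
      intro t
      by_cases hmem : φ t ∈ S <;>
        simp [Set.indicator_of_mem, Set.indicator_of_notMem, hmem]
    rw [integral_eq_lintegral_of_nonneg_ae]
    · congr 1
      refine lintegral_congr fun t => (heq t).symm
    · exact ae_restrict_of_ae (Filter.Eventually.of_forall fun t => by
        by_cases hmem : t ∈ φ ⁻¹' S <;> simp [Set.indicator_of_mem, Set.indicator_of_notMem, hmem])
    · exact (measurable_one.indicator hφmeas).aestronglyMeasurable.restrict
  rw [hftc]
  calc |∫ t in Set.Ioc (0:ℝ) 1, deriv G t| ≤ _ := hmono
  _ = c + 2 * ∫ t in Set.Ioc (0:ℝ) 1, (φ ⁻¹' S).indicator (fun _ => (1:ℝ)) t := hsplit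
  _ = _ := by rw [hlint]

theorem exists_good_translate {n : ℕ} {S : Set (EuclideanSpace ℝ (Fin n))}
    (hS : MeasurableSet S) (x' : EuclideanSpace ℝ (Fin n)) {r : ℝ} (hr : 0 < r)
    {c : ℝ≥0∞}
    (hc : volume S < c * volume (Metric.ball (0 : EuclideanSpace ℝ (Fin n)) r)) :
    ∃ y ∈ Metric.ball (0 : EuclideanSpace ℝ (Fin n)) r,
      (∫⁻ t in Set.Ioc (0:ℝ) 1, S.indicator (fun _ => (1:ℝ≥0∞)) (y + t • x')) ≤ c := by
  set B := Metric.ball (0 : EuclideanSpace ℝ (Fin n)) r with hB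
  set f : EuclideanSpace ℝ (Fin n) → ℝ → ℝ≥0∞ :=
    fun y t => S.indicator (fun _ => (1:ℝ≥0∞)) (y + t • x') with hf
  have hψ : Measurable (fun p : EuclideanSpace ℝ (Fin n) × ℝ => p.1 + p.2 • x') :=
    (continuous_fst.add (continuous_snd.smul continuous_const)).measurable
  have hfm : Measurable (Function.uncurry f) := by
    exact (measurable_const.indicator hS).comp hψ
  set F : EuclideanSpace ℝ (Fin n) → ℝ≥0∞ :=
    fun y => ∫⁻ t in Set.Ioc (0:ℝ) 1, f y t with hF
  have hFm : Measurable F := hfm.lintegral_prod_right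
  -- Tonelli bound
  have key : ∫⁻ y in B, F y ≤ volume S := by
    have hswap : ∫⁻ y in B, ∫⁻ t in Set.Ioc (0:ℝ) 1, f y t
        = ∫⁻ t in Set.Ioc (0:ℝ) 1, ∫⁻ y in B, f y t := by
      exact lintegral_lintegral_swap (hfm.aemeasurable)
    rw [hF]
    rw [hswap]
    have inner_le : ∀ t : ℝ, ∫⁻ y in B, f y t ≤ volume S := by
      intro t
      have heq : ∀ y : EuclideanSpace ℝ (Fin n),
          f y t = ((fun y => y + t • x') ⁻¹' S).indicator (fun _ => (1:ℝ≥0∞)) y := by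
        intro y
        classical
        simp only [hf, Set.indicator_apply, Set.mem_preimage]
      have hpre : MeasurableSet ((fun y => y + t • x') ⁻¹' S) :=
        hS.preimage (measurable_id.add_const _)
      calc ∫⁻ y in B, f y t
          = ∫⁻ y in B, ((fun y => y + t • x') ⁻¹' S).indicator (fun _ => (1:ℝ≥0∞)) y := by
            exact lintegral_congr fun y => heq y
        _ = volume (((fun y => y + t • x') ⁻¹' S) ∩ B) := by
            have : ((fun y => y + t • x') ⁻¹' S).indicator (fun _ => (1:ℝ≥0∞))
                = ((fun y => y + t • x') ⁻¹' S).indicator 1 := rfl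
            rw [this, MeasureTheory.lintegral_indicator_one hpre,
              Measure.restrict_apply hpre]
        _ ≤ volume ((fun y => y + t • x') ⁻¹' S) := measure_mono Set.inter_subset_left
        _ = volume S := measure_preimage_add_right volume (t • x') S
    calc ∫⁻ t in Set.Ioc (0:ℝ) 1, ∫⁻ y in B, f y t
        ≤ ∫⁻ _t in Set.Ioc (0:ℝ) 1, volume S := by
          exact setLIntegral_mono measurable_const fun t _ => inner_le t
      _ = volume S := by rw [setLIntegral_const]; simp [Real.volume_Ioc]
  -- pigeonhole
  by_contra hcon
  push_neg at hcon
  have hall : ∀ y ∈ B, c ≤ F y := fun y hy => (hcon y hy).le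
  have : c * volume B ≤ ∫⁻ y in B, F y := by
    calc c * volume B = ∫⁻ _y in B, c := (setLIntegral_const B c).symm
    _ ≤ ∫⁻ y in B, F y := setLIntegral_mono hFm hall
  exact absurd (lt_of_le_of_lt (this.trans key) hc) (lt_irrefl _)

set_option maxHeartbeats 1000000 in
theorem proximity_to_affine
    (n : ℕ) (hn : 1 ≤ n) :
    ∀ ε > (0 : ℝ),
      ∃ μ ∈ Set.Ioo (0 : ℝ) 1, ∃ δ ∈ Set.Ioo (0 : ℝ) 1,
        ∀ (v : EuclideanSpace ℝ (Fin n) → ℝ) (e : EuclideanSpace ℝ (Fin n)),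
          LipschitzOnWith 1 v (Metric.ball 0 2) →
          v 0 = 0 →
          ‖e‖ = 1 →
          volume {x ∈ Metric.ball (0 : EuclideanSpace ℝ (Fin n)) 1 |
              DifferentiableAt ℝ v x ∧ ⟪gradient v x, e⟫ ≤ δ} ≤
            ENNReal.ofReal μ * volume (Metric.ball (0 : EuclideanSpace ℝ (Fin n)) 1) →
          ∃ a ∈ Set.Icc (-1 : ℝ) 1, ∃ ξ : EuclideanSpace ℝ (Fin n), ‖ξ‖ = 1 ∧
            ∀ x ∈ Metric.ball (0 : EuclideanSpace ℝ (Fin n)) 1,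
              |v x - (a + ⟪ξ, x⟫)| ≤ ε := by
  haveI : Nontrivial (EuclideanSpace ℝ (Fin n)) := by
    have hfr : 0 < Module.finrank ℝ (EuclideanSpace ℝ (Fin n)) := by
      rw [finrank_euclideanSpace_fin]; omega
    exact Module.nontrivial_of_finrank_pos hfr
  intro ε hε
  set ε' : ℝ := min ε 1 with hε'def
  have hε'pos : 0 < ε' := lt_min hε one_pos
  have hε'le1 : ε' ≤ 1 := min_le_right _ _
  have hε'leε : ε' ≤ ε := min_le_left _ _
  set r : ℝ := ε' / 16 with hrdef
  have hrpos : 0 < r := by positivity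
  set ρ : ℝ := ε' / 8 with hρdef
  set δ : ℝ := 1 - ε' ^ 2 / 32 with hδdef
  set μ₀ : ℝ := min (1/2) (ε' * r ^ n / 32) with hμ₀def
  have hμ₀pos : 0 < μ₀ := lt_min (by norm_num) (by positivity)
  have hsq : ε' ^ 2 ≤ 1 := by nlinarith
  refine ⟨μ₀, ⟨hμ₀pos, lt_of_le_of_lt (min_le_left _ _) (by norm_num)⟩,
    δ, ⟨by rw [hδdef]; nlinarith, by rw [hδdef]; nlinarith⟩, ?_⟩
  intro v e hv hv0 he hvol
  -- extend `v` to a globally 1-Lipschitz function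
  obtain ⟨vt, hvtlip, heqv⟩ := hv.extend_real
  have heq2 : ∀ q ∈ Metric.ball (0 : EuclideanSpace ℝ (Fin n)) 2, v q = vt q := heqv
  -- the auxiliary function `w`
  set w : EuclideanSpace ℝ (Fin n) → ℝ := fun q => vt q - ⟪e, q⟫ with hwdef
  have hwlip : LipschitzWith 2 w := by
    apply LipschitzWith.of_dist_le_mul
    intro p q
    have h1 : dist (vt p) (vt q) ≤ 1 * dist p q := hvtlip.dist_le_mul p q
    have h2 : |⟪e, p⟫ - ⟪e, q⟫| ≤ dist p q := by
      rw [← inner_sub_right]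
      calc |⟪e, p - q⟫| ≤ ‖e‖ * ‖p - q‖ := abs_real_inner_le_norm e (p - q)
      _ = dist p q := by rw [he, one_mul, dist_eq_norm]
    rw [Real.dist_eq] at h1 ⊢
    have : w p - w q = (vt p - vt q) - (⟪e, p⟫ - ⟪e, q⟫) := by simp only [hwdef]; ring
    rw [this]
    calc |(vt p - vt q) - (⟪e, p⟫ - ⟪e, q⟫)| ≤ |vt p - vt q| + |⟪e, p⟫ - ⟪e, q⟫| := abs_sub _ _
    _ ≤ 2 * dist p q := by push_cast; linarith
  -- gradient equals fderiv applied
  have hgrad : ∀ (p q : EuclideanSpace ℝ (Fin n)), ⟪gradient v p, q⟫ = fderiv ℝ v p q := by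
    intro p q
    rw [gradient]
    exact InnerProductSpace.toDual_symm_apply
  -- the exceptional set
  set Gd : Set (EuclideanSpace ℝ (Fin n)) :=
    {p | p ∈ Metric.ball (0 : EuclideanSpace ℝ (Fin n)) 1 ∧ DifferentiableAt ℝ v p ∧
      δ < ⟪gradient v p, e⟫} with hGddef
  set S : Set (EuclideanSpace ℝ (Fin n)) :=
    Metric.ball (0 : EuclideanSpace ℝ (Fin n)) 1 \ Gd with hSdef
  have hGdmeas : MeasurableSet Gd := by
    have h1 : Gd = Metric.ball (0 : EuclideanSpace ℝ (Fin n)) 1 ∩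
        ({p | DifferentiableAt ℝ v p} ∩ {p | δ < fderiv ℝ v p e}) := by
      ext p
      simp only [hGddef, Set.mem_setOf_eq, Set.mem_inter_iff, hgrad]
      try tauto
    rw [h1]
    exact measurableSet_ball.inter ((measurableSet_of_differentiableAt ℝ v).inter
      (measurableSet_lt measurable_const (measurable_fderiv_apply_const ℝ v e)))
  have hSmeas : MeasurableSet S := measurableSet_ball.diff hGdmeas
  -- `S` has small volume
  have hSsub : S ⊆ {x ∈ Metric.ball (0 : EuclideanSpace ℝ (Fin n)) 1 |
      DifferentiableAt ℝ v x ∧ ⟪gradient v x, e⟫ ≤ δ} ∪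
      {x ∈ Metric.ball (0 : EuclideanSpace ℝ (Fin n)) 1 | ¬ DifferentiableAt ℝ v x} := by
    rintro p ⟨hp1, hp2⟩
    by_cases hd : DifferentiableAt ℝ v p
    · left
      refine ⟨hp1, hd, ?_⟩
      by_contra hlt
      exact hp2 ⟨hp1, hd, lt_of_not_ge hlt⟩
    · right; exact ⟨hp1, hd⟩
  have hnull : volume {x ∈ Metric.ball (0 : EuclideanSpace ℝ (Fin n)) 1 |
      ¬ DifferentiableAt ℝ v x} = 0 := by
    have hsub : {x ∈ Metric.ball (0 : EuclideanSpace ℝ (Fin n)) 1 |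
        ¬ DifferentiableAt ℝ v x} ⊆ {x | ¬ DifferentiableAt ℝ vt x} := by
      rintro p ⟨hp1, hp2⟩
      intro hd
      apply hp2
      have hmem : Metric.ball (0 : EuclideanSpace ℝ (Fin n)) 2 ∈ 𝓝 p := by
        apply (Metric.isOpen_ball).mem_nhds
        exact Metric.mem_ball.2 (lt_trans (Metric.mem_ball.1 hp1) one_lt_two)
      have hee : v =ᶠ[𝓝 p] vt := Filter.eventuallyEq_of_mem hmem heq2
      exact hd.congr_of_eventuallyEq hee
    refine measure_mono_null hsub ?_
    have := hvtlip.ae_differentiableAt (μ := volume)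
    rwa [MeasureTheory.ae_iff] at this
  have hSvol : volume S ≤ ENNReal.ofReal μ₀ * volume (Metric.ball (0 : EuclideanSpace ℝ (Fin n)) 1) := by
    calc volume S ≤ volume ({x ∈ Metric.ball (0 : EuclideanSpace ℝ (Fin n)) 1 |
          DifferentiableAt ℝ v x ∧ ⟪gradient v x, e⟫ ≤ δ} ∪
          {x ∈ Metric.ball (0 : EuclideanSpace ℝ (Fin n)) 1 | ¬ DifferentiableAt ℝ v x}) :=
        measure_mono hSsub
    _ ≤ volume {x ∈ Metric.ball (0 : EuclideanSpace ℝ (Fin n)) 1 |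
          DifferentiableAt ℝ v x ∧ ⟪gradient v x, e⟫ ≤ δ} +
        volume {x ∈ Metric.ball (0 : EuclideanSpace ℝ (Fin n)) 1 | ¬ DifferentiableAt ℝ v x} :=
        measure_union_le _ _
    _ ≤ ENNReal.ofReal μ₀ * volume (Metric.ball (0 : EuclideanSpace ℝ (Fin n)) 1) := by
        rw [hnull, add_zero]; exact hvol
  have hball0 : volume (Metric.ball (0 : EuclideanSpace ℝ (Fin n)) 1) ≠ 0 :=
    (measure_ball_pos volume 0 one_pos).ne'
  have hballtop : volume (Metric.ball (0 : EuclideanSpace ℝ (Fin n)) 1) ≠ ∞ :=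
    measure_ball_lt_top.ne
  have hrball : volume (Metric.ball (0 : EuclideanSpace ℝ (Fin n)) r)
      = ENNReal.ofReal (r ^ n) * volume (Metric.ball (0 : EuclideanSpace ℝ (Fin n)) 1) := by
    have := MeasureTheory.Measure.addHaar_ball (μ := volume)
      (0 : EuclideanSpace ℝ (Fin n)) hrpos.le
    rwa [finrank_euclideanSpace_fin] at this
  have hlt : volume S < ENNReal.ofReal (ε'/16) *
      volume (Metric.ball (0 : EuclideanSpace ℝ (Fin n)) r) := by
    rw [hrball, ← mul_assoc, ← ENNReal.ofReal_mul (by positivity)]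
    refine lt_of_le_of_lt hSvol ?_
    rw [ENNReal.mul_lt_mul_iff_left hball0 hballtop]
    rw [ENNReal.ofReal_lt_ofReal_iff (by positivity)]
    have h1 : μ₀ ≤ ε' * r ^ n / 32 := min_le_right _ _
    have h2 : (0:ℝ) < r ^ n := by positivity
    nlinarith
  -- conclusion setup
  refine ⟨0, by norm_num, e, he, ?_⟩
  intro x hx
  have hxnorm : ‖x‖ < 1 := by simpa [Metric.mem_ball, dist_eq_norm] using hx
  set x' : EuclideanSpace ℝ (Fin n) := (1 - ρ) • x with hx'def
  have hρle : ρ ≤ 1/8 := by rw [hρdef]; linarith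
  have hρpos : 0 < ρ := by positivity
  have hx'norm : ‖x'‖ ≤ 1 - ρ := by
    rw [hx'def, norm_smul, Real.norm_eq_abs, abs_of_nonneg (by linarith)]
    nlinarith
  have hx'le1 : ‖x'‖ ≤ 1 := le_trans hx'norm (by linarith)
  obtain ⟨y, hy, hFy⟩ := exists_good_translate hSmeas x' hrpos hlt
  have hynorm : ‖y‖ < r := by simpa [Metric.mem_ball, dist_eq_norm] using hy
  have hrρ : r < ρ := by rw [hrdef, hρdef]; linarith
  -- the segment hypothesis
  have hseg : ∀ t ∈ Set.Icc (0:ℝ) 1, y + t • x' ∉ S →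
      DifferentiableAt ℝ w (y + t • x') ∧ |fderiv ℝ w (y + t • x') x'| ≤ ε'/4 := by
    intro t ht hnS
    set p := y + t • x' with hpdef
    have hpnorm : ‖p‖ < 1 := by
      calc ‖p‖ ≤ ‖y‖ + ‖t • x'‖ := norm_add_le _ _
      _ ≤ r + (1 - ρ) := by
          rw [norm_smul, Real.norm_eq_abs, abs_of_nonneg ht.1]
          have : t * ‖x'‖ ≤ 1 - ρ := by nlinarith [ht.2, hx'norm, norm_nonneg x', ht.1]
          linarith [hynorm.le]
      _ < 1 := by linarith
    have hpball : p ∈ Metric.ball (0 : EuclideanSpace ℝ (Fin n)) 1 := by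
      simpa [Metric.mem_ball, dist_eq_norm] using hpnorm
    have hpGd : p ∈ Gd := by
      by_contra h
      exact hnS ⟨hpball, h⟩
    obtain ⟨-, hdv, hδlt⟩ := hpGd
    have hmem2 : Metric.ball (0 : EuclideanSpace ℝ (Fin n)) 2 ∈ 𝓝 p := by
      apply Metric.isOpen_ball.mem_nhds
      simp only [Metric.mem_ball, dist_eq_norm, sub_zero]
      linarith
    have hee : v =ᶠ[𝓝 p] vt := Filter.eventuallyEq_of_mem hmem2 heq2
    have hdvt : DifferentiableAt ℝ vt p := hdv.congr_of_eventuallyEq hee.symm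
    have hfeq : fderiv ℝ vt p = fderiv ℝ v p := hee.symm.fderiv_eq
    have hinnerd : HasFDerivAt (fun q : EuclideanSpace ℝ (Fin n) => ⟪e, q⟫)
        (innerSL ℝ e) p := (innerSL ℝ e).hasFDerivAt
    have hwd : HasFDerivAt w (fderiv ℝ vt p - innerSL ℝ e) p :=
      hdvt.hasFDerivAt.sub hinnerd
    refine ⟨hwd.differentiableAt, ?_⟩
    have happ : fderiv ℝ w p x' = ⟪gradient v p - e, x'⟫ := by
      rw [hwd.fderiv]
      simp only [ContinuousLinearMap.sub_apply, innerSL_apply_apply, hfeq]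
      rw [← hgrad p x', inner_sub_left]
    have hgnorm : ‖gradient v p‖ ≤ 1 := by
      have h1 : ‖fderiv ℝ vt p‖ ≤ (1:ℝ≥0) := hdvt.hasFDerivAt.le_of_lipschitz hvtlip
      have h2 : ‖gradient v p‖ = ‖fderiv ℝ v p‖ := by
        rw [gradient]
        exact LinearIsometryEquiv.norm_map _ _
      rw [h2, ← hfeq]
      simpa using h1
    have hdiff2 : ‖gradient v p - e‖ ≤ ε'/4 := by
      have hsq2 : ‖gradient v p - e‖ ^ 2 ≤ (ε'/4) ^ 2 := by
        rw [norm_sub_sq_real, he]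
        have := hδlt
        rw [hδdef] at this
        nlinarith [hgnorm, norm_nonneg (gradient v p)]
      nlinarith [norm_nonneg (gradient v p - e), hε'pos]
    rw [happ]
    calc |⟪gradient v p - e, x'⟫| ≤ ‖gradient v p - e‖ * ‖x'‖ := abs_real_inner_le_norm _ _
    _ ≤ ε'/4 := by nlinarith [norm_nonneg (gradient v p - e), norm_nonneg x']
  have hmid := segment_estimate hwlip y x' hx'le1 hSmeas (by positivity : (0:ℝ) ≤ ε'/4) hseg
  have hFy' : (∫⁻ t in Set.Ioc (0:ℝ) 1,
      S.indicator (fun _ => (1:ℝ≥0∞)) (y + t • x')).toReal ≤ ε'/16 := by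
    have := ENNReal.toReal_mono ENNReal.ofReal_ne_top hFy
    rwa [ENNReal.toReal_ofReal (by positivity)] at this
  have hmid2 : |w (y + x') - w y| ≤ ε'/4 + ε'/8 := by
    calc |w (y + x') - w y| ≤ ε'/4 + 2 * (∫⁻ t in Set.Ioc (0:ℝ) 1,
          S.indicator (fun _ => (1:ℝ≥0∞)) (y + t • x')).toReal := hmid
    _ ≤ ε'/4 + ε'/8 := by linarith
  -- assemble
  have hwdist : ∀ p q : EuclideanSpace ℝ (Fin n), |w p - w q| ≤ 2 * ‖p - q‖ := by
    intro p q
    have := hwlip.dist_le_mul p q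
    rwa [Real.dist_eq, dist_eq_norm] at this
  have hw0 : w 0 = 0 := by
    have h0 : vt 0 = v 0 := (heq2 0 (Metric.mem_ball_self two_pos)).symm
    simp [hwdef, h0, hv0]
  have hA1 : |w x - w x'| ≤ 2 * ρ := by
    have hxx' : x - x' = ρ • x := by
      rw [hx'def, sub_smul, one_smul]
      abel
    calc |w x - w x'| ≤ 2 * ‖x - x'‖ := hwdist x x'
    _ ≤ 2 * ρ := by
        rw [hxx', norm_smul, Real.norm_eq_abs, abs_of_nonneg hρpos.le]
        nlinarith
  have hA2 : |w x' - w (y + x')| ≤ 2 * r := by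
    have h1 : x' - (y + x') = -y := by abel
    calc |w x' - w (y + x')| ≤ 2 * ‖x' - (y + x')‖ := hwdist _ _
    _ ≤ 2 * r := by rw [h1, norm_neg]; linarith [hynorm.le]
  have hA3 : |w y - w 0| ≤ 2 * r := by
    calc |w y - w 0| ≤ 2 * ‖y - 0‖ := hwdist _ _
    _ ≤ 2 * r := by rw [sub_zero]; linarith [hynorm.le]
  have hvx : v x = vt x := heq2 x (Metric.mem_ball.2 (lt_trans (Metric.mem_ball.1 hx) one_lt_two))
  have hwx : |w x| ≤ 7 * ε' / 8 := by
    have t1 : |w x - w 0| ≤ |w x - w x'| + |w x' - w 0| := abs_sub_le _ _ _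
    have t2 : |w x' - w 0| ≤ |w x' - w (y + x')| + |w (y + x') - w 0| := abs_sub_le _ _ _
    have t3 : |w (y + x') - w 0| ≤ |w (y + x') - w y| + |w y - w 0| := abs_sub_le _ _ _
    have t4 : |w x| = |w x - w 0| := by rw [hw0, sub_zero]
    have hρr : ρ = ε' / 8 := hρdef
    have hrr : r = ε' / 16 := hrdef
    linarith
  have : |v x - (0 + ⟪e, x⟫)| = |w x| := by
    rw [hvx]
    congr 1
    simp [hwdef]
  rw [this]
  linarith
end

section
/- Let n ≥ 1, α₁ ∈ (0,1), r ∈ (0,1), λ ∈ (0,1) and α > 0 with α ≤ α₁/2 and λ^{α₁/2} (4/r)^{1+α₁} ≤ 1. Let v : ℝⁿ → ℝ satisfy v(0) = 0, |v(x)| ≤ max{1, |x|^{1+α₁}} for all x ∈ ℝⁿ, and suppose v is differentiable at every point of B_{r/4} with |Dv(x)| ≤ λ^α there. Then the rescaled function w(x) := λ^{−(1+α)} v(λx) satisfies |w(x)| ≤ max{1, |x|^{1+α₁}} for all x ∈ ℝⁿ. -/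
open Metric MeasureTheory Filter Set
open scoped Topology

theorem growth_propagation_rescaled
    (n : ℕ) (hn : 1 ≤ n)
    (α₁ r lam α : ℝ)
    (hα₁ : α₁ ∈ Set.Ioo (0 : ℝ) 1) (hr : r ∈ Set.Ioo (0 : ℝ) 1)
    (hlam : lam ∈ Set.Ioo (0 : ℝ) 1)
    (hα_pos : 0 < α) (hα_le : α ≤ α₁ / 2)
    (hsmall : lam ^ (α₁ / 2) * (4 / r) ^ (1 + α₁) ≤ 1)
    (v : EuclideanSpace ℝ (Fin n) → ℝ)
    (hv0 : v 0 = 0)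
    (hv_growth : ∀ x, |v x| ≤ max 1 (‖x‖ ^ (1 + α₁)))
    (hv_grad : ∀ x ∈ Metric.ball (0 : EuclideanSpace ℝ (Fin n)) (r / 4),
      DifferentiableAt ℝ v x ∧ ‖gradient v x‖ ≤ lam ^ α) :
    ∀ x : EuclideanSpace ℝ (Fin n),
      |lam ^ (-(1 + α)) * v (lam • x)| ≤ max 1 (‖x‖ ^ (1 + α₁)) := by
  obtain ⟨hl0, hl1⟩ := hlam
  obtain ⟨hα₁0, hα₁1⟩ := hα₁
  obtain ⟨hr0, hr1⟩ := hr
  have hr4 : (0:ℝ) < r / 4 := by linarith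
  have hlnegpos : (0:ℝ) < lam ^ (-(1 + α)) := Real.rpow_pos_of_pos hl0 _
  -- key : lam ^ (α₁/2) ≤ (r/4)^(1+α₁)
  have hb : (0:ℝ) < (r/4) ^ (1 + α₁) := Real.rpow_pos_of_pos hr4 _
  have key : lam ^ (α₁ / 2) ≤ (r/4) ^ (1 + α₁) := by
    have h4r : (4 / r) ^ (1 + α₁) = ((r/4) ^ (1 + α₁))⁻¹ := by
      rw [show (4:ℝ)/r = (r/4)⁻¹ by field_simp, Real.inv_rpow hr4.le]
    rw [h4r] at hsmall
    calc lam ^ (α₁/2) = lam ^ (α₁/2) * ((r/4)^(1+α₁))⁻¹ * (r/4)^(1+α₁) := by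
          field_simp
      _ ≤ 1 * (r/4)^(1+α₁) := by nlinarith
      _ = (r/4)^(1+α₁) := by ring
  -- λ^{α₁-α} ≤ λ^{α₁/2}
  have hmono : lam ^ (α₁ - α) ≤ lam ^ (α₁ / 2) :=
    Real.rpow_le_rpow_of_exponent_ge hl0 hl1.le (by linarith)
  intro x
  have hnorm : ‖lam • x‖ = lam * ‖x‖ := by
    rw [norm_smul, Real.norm_of_nonneg hl0.le]
  by_cases hc : lam * ‖x‖ < r / 4
  · -- MVT case
    have hball : lam • x ∈ Metric.ball (0 : EuclideanSpace ℝ (Fin n)) (r/4) := by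
      rw [mem_ball_zero_iff, hnorm]; exact hc
    have hbound : ∀ y ∈ Metric.ball (0 : EuclideanSpace ℝ (Fin n)) (r/4),
        ‖fderiv ℝ v y‖ ≤ lam ^ α := by
      intro y hy
      have := (hv_grad y hy).2
      rwa [show gradient v y = (InnerProductSpace.toDual ℝ _).symm (fderiv ℝ v y) from rfl,
        LinearIsometryEquiv.norm_map] at this
    have hmvt := Convex.norm_image_sub_le_of_norm_fderiv_le
      (fun y hy => (hv_grad y hy).1) hbound (convex_ball _ _) (mem_ball_self hr4) hball
    rw [hv0, sub_zero, sub_zero, Real.norm_eq_abs, hnorm] at hmvt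
    have h1 : |lam ^ (-(1 + α)) * v (lam • x)| ≤ lam ^ (-(1+α)) * (lam ^ α * (lam * ‖x‖)) := by
      rw [abs_mul, abs_of_pos hlnegpos]
      exact mul_le_mul_of_nonneg_left hmvt hlnegpos.le
    have h2 : lam ^ (-(1+α)) * (lam ^ α * (lam * ‖x‖)) = ‖x‖ := by
      rw [show lam * ‖x‖ = lam ^ (1:ℝ) * ‖x‖ by rw [Real.rpow_one]]
      rw [← mul_assoc, ← Real.rpow_add hl0, ← mul_assoc, ← Real.rpow_add hl0]
      norm_num
    rw [h2] at h1
    refine h1.trans ?_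
    rcases le_or_gt ‖x‖ 1 with h | h
    · exact le_max_of_le_left h
    · refine le_max_of_le_right ?_
      calc ‖x‖ = ‖x‖ ^ (1:ℝ) := (Real.rpow_one _).symm
        _ ≤ ‖x‖ ^ (1 + α₁) := Real.rpow_le_rpow_of_exponent_le h.le (by linarith)
  · -- growth case: ‖x‖ ≥ r/(4 lam)
    push_neg at hc
    have hxpos : 0 < ‖x‖ := by
      rcases lt_or_ge 0 ‖x‖ with h | h
      · exact h
      · exfalso; have : ‖x‖ = 0 := le_antisymm h (norm_nonneg x); nlinarith
    refine le_max_of_le_right ?_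
    have hgr := hv_growth (lam • x)
    rw [hnorm] at hgr
    have habs : |lam ^ (-(1 + α)) * v (lam • x)| ≤
        lam ^ (-(1+α)) * max 1 ((lam * ‖x‖) ^ (1 + α₁)) := by
      rw [abs_mul, abs_of_pos hlnegpos]
      exact mul_le_mul_of_nonneg_left hgr hlnegpos.le
    refine habs.trans ?_
    rcases le_or_gt (lam * ‖x‖) 1 with h | h
    · have hmax : max 1 ((lam * ‖x‖) ^ (1 + α₁)) = 1 := by
        rw [max_eq_left]
        calc (lam * ‖x‖) ^ (1 + α₁) ≤ 1 ^ (1 + α₁) :=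
              Real.rpow_le_rpow (by positivity) h (by linarith)
          _ = 1 := Real.one_rpow _
      rw [hmax, mul_one]
      -- need: lam^{-(1+α)} ≤ ‖x‖^{1+α₁}
      have hxge : r / 4 / lam ≤ ‖x‖ := by
        rw [div_le_iff₀ hl0] at *
        nlinarith
      have h3 : (r/4/lam) ^ (1 + α₁) ≤ ‖x‖ ^ (1 + α₁) :=
        Real.rpow_le_rpow (by positivity) hxge (by linarith)
      refine le_trans ?_ h3
      calc lam ^ (-(1+α)) = lam ^ (α₁ - α) / lam ^ (1+α₁) := by
            rw [show -(1+α) = (α₁-α)-(1+α₁) by ring, Real.rpow_sub hl0]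
        _ ≤ lam ^ (α₁/2) / lam ^ (1+α₁) := by gcongr
        _ ≤ (r/4)^(1+α₁) / lam ^ (1+α₁) := by gcongr
        _ = (r/4/lam)^(1+α₁) := (Real.div_rpow hr4.le hl0.le _).symm
    · have hmax : max 1 ((lam * ‖x‖) ^ (1 + α₁)) = (lam * ‖x‖) ^ (1 + α₁) := by
        rw [max_eq_right]
        calc (1:ℝ) = 1 ^ (1 + α₁) := (Real.one_rpow _).symm
          _ ≤ (lam * ‖x‖) ^ (1 + α₁) := Real.rpow_le_rpow (by norm_num) h.le (by linarith)
      rw [hmax, Real.mul_rpow hl0.le (norm_nonneg x), ← mul_assoc,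
        ← Real.rpow_add hl0]
      have : lam ^ (-(1 + α) + (1 + α₁)) ≤ 1 := by
        rw [show -(1 + α) + (1 + α₁) = α₁ - α by ring]
        exact Real.rpow_le_one hl0.le hl1.le (by linarith)
      nlinarith [Real.rpow_pos_of_pos hxpos (1 + α₁)]
end

section
/- Let n ≥ 1, α₁ ∈ (0,1), β ∈ (0, α₁), and λ ∈ (0,1) with 4 λ^{α₁−β} ≤ 1. Let u : ℝⁿ → ℝ satisfy |u(x)| ≤ max{1, |x|^{1+α₁}} for all x ∈ ℝⁿ, and let ℓ(x) := a + ξ · x be an affine function with |a| ≤ 2 and |ξ| = 1, such that sup_{x ∈ B₁} |u(x) − ℓ(x)| ≤ λ². Then the rescaled function w(x) := λ^{−(1+β)} (u(λx) − ℓ(λx)) satisfies |w(x)| ≤ max{1, |x|^{1+α₁}} for all x ∈ ℝⁿ. -/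
open Metric MeasureTheory Filter Set
open scoped RealInnerProductSpace

theorem growth_bound_small_perturbation_rescaling
    (n : ℕ) (hn : 1 ≤ n)
    (α₁ β lam : ℝ)
    (hα₁ : α₁ ∈ Set.Ioo (0 : ℝ) 1) (hβ : β ∈ Set.Ioo (0 : ℝ) α₁)
    (hlam : lam ∈ Set.Ioo (0 : ℝ) 1)
    (hsmall : 4 * lam ^ (α₁ - β) ≤ 1)
    (u : EuclideanSpace ℝ (Fin n) → ℝ)
    (hu_growth : ∀ x, |u x| ≤ max 1 (‖x‖ ^ (1 + α₁)))
    (a : ℝ) (ξ : EuclideanSpace ℝ (Fin n))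
    (ha : |a| ≤ 2) (hξ : ‖ξ‖ = 1)
    (hclose : ∀ x ∈ Metric.ball (0 : EuclideanSpace ℝ (Fin n)) 1,
      |u x - (a + ⟪ξ, x⟫)| ≤ lam ^ 2) :
    ∀ x : EuclideanSpace ℝ (Fin n),
      |lam ^ (-(1 + β) : ℝ) * (u (lam • x) - (a + ⟪ξ, lam • x⟫))| ≤
        max 1 (‖x‖ ^ (1 + α₁)) := by
  intro x
  obtain ⟨hl0, hl1⟩ := hlam
  have hl0' : (0:ℝ) ≤ lam := hl0.le
  have hrpos : 0 < lam ^ (-(1 + β) : ℝ) := Real.rpow_pos_of_pos hl0 _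
  have hnx : 0 ≤ ‖x‖ := norm_nonneg x
  have hnorm : ‖lam • x‖ = lam * ‖x‖ := by
    rw [norm_smul, Real.norm_eq_abs, abs_of_nonneg hl0']
  rw [abs_mul, abs_of_pos hrpos]
  rcases lt_or_ge (lam * ‖x‖) 1 with hcase | hcase
  · -- small case: lam • x ∈ ball 0 1
    have hmem : lam • x ∈ Metric.ball (0 : EuclideanSpace ℝ (Fin n)) 1 := by
      rw [mem_ball_zero_iff, hnorm]; exact hcase
    have h1 := hclose _ hmem
    have key : lam ^ (-(1 + β) : ℝ) * |u (lam • x) - (a + ⟪ξ, lam • x⟫)| ≤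
        lam ^ ((1:ℝ) - β) := by
      calc lam ^ (-(1 + β) : ℝ) * |u (lam • x) - (a + ⟪ξ, lam • x⟫)|
          ≤ lam ^ (-(1 + β) : ℝ) * lam ^ 2 := by
            exact mul_le_mul_of_nonneg_left h1 hrpos.le
        _ = lam ^ ((1:ℝ) - β) := by
            rw [← Real.rpow_natCast lam 2, ← Real.rpow_add hl0]
            congr 1
            push_cast
            ring
    refine le_trans key (le_trans ?_ (le_max_left _ _))
    exact Real.rpow_le_one hl0' hl1.le (by linarith [hβ.2, hα₁.2])
  · -- large case
    have hx1 : 1 ≤ ‖x‖ := le_trans hcase (by nlinarith)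
    have hexp : (0:ℝ) ≤ 1 + α₁ := by linarith [hα₁.1]
    have hb1 : 1 ≤ (lam * ‖x‖) ^ (1 + α₁ : ℝ) :=
      Real.one_le_rpow hcase hexp
    have hb2 : lam * ‖x‖ ≤ (lam * ‖x‖) ^ (1 + α₁ : ℝ) := by
      nth_rewrite 1 [← Real.rpow_one (lam * ‖x‖)]
      exact Real.rpow_le_rpow_of_exponent_le hcase (by linarith [hα₁.1])
    have hinner : |⟪ξ, lam • x⟫| ≤ lam * ‖x‖ := by
      calc |⟪ξ, lam • x⟫| ≤ ‖ξ‖ * ‖lam • x‖ := abs_real_inner_le_norm _ _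
        _ = lam * ‖x‖ := by rw [hξ, one_mul, hnorm]
    have hu := hu_growth (lam • x)
    rw [hnorm] at hu
    have hmax : max 1 ((lam * ‖x‖) ^ (1 + α₁ : ℝ)) = (lam * ‖x‖) ^ (1 + α₁ : ℝ) :=
      max_eq_right hb1
    rw [hmax] at hu
    have hsum : |u (lam • x) - (a + ⟪ξ, lam • x⟫)| ≤ 4 * (lam * ‖x‖) ^ (1 + α₁ : ℝ) := by
      calc |u (lam • x) - (a + ⟪ξ, lam • x⟫)|
          ≤ |u (lam • x)| + (|a| + |⟪ξ, lam • x⟫|) :=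
            le_trans (abs_sub _ _) (by gcongr; exact abs_add_le _ _)
        _ ≤ (lam * ‖x‖) ^ (1 + α₁ : ℝ) + (2 + lam * ‖x‖) := by
            gcongr
        _ ≤ 4 * (lam * ‖x‖) ^ (1 + α₁ : ℝ) := by nlinarith
    have hmul : (lam * ‖x‖) ^ (1 + α₁ : ℝ) = lam ^ (1 + α₁ : ℝ) * ‖x‖ ^ (1 + α₁ : ℝ) :=
      Real.mul_rpow hl0' hnx
    have hfinal : lam ^ (-(1 + β) : ℝ) * (4 * (lam * ‖x‖) ^ (1 + α₁ : ℝ)) ≤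
        ‖x‖ ^ (1 + α₁ : ℝ) := by
      rw [hmul]
      have : lam ^ (-(1 + β) : ℝ) * (4 * (lam ^ (1 + α₁ : ℝ) * ‖x‖ ^ (1 + α₁ : ℝ)))
          = (4 * lam ^ (α₁ - β : ℝ)) * ‖x‖ ^ (1 + α₁ : ℝ) := by
        rw [show lam ^ (-(1 + β) : ℝ) * (4 * (lam ^ (1 + α₁ : ℝ) * ‖x‖ ^ (1 + α₁ : ℝ)))
          = 4 * (lam ^ (-(1 + β) : ℝ) * lam ^ (1 + α₁ : ℝ)) * ‖x‖ ^ (1 + α₁ : ℝ) by ring,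
          ← Real.rpow_add hl0, show (-(1 + β) + (1 + α₁) : ℝ) = α₁ - β by ring]
      rw [this]
      have hxp : 0 ≤ ‖x‖ ^ (1 + α₁ : ℝ) := Real.rpow_nonneg hnx _
      nlinarith
    calc lam ^ (-(1 + β) : ℝ) * |u (lam • x) - (a + ⟪ξ, lam • x⟫)|
        ≤ lam ^ (-(1 + β) : ℝ) * (4 * (lam * ‖x‖) ^ (1 + α₁ : ℝ)) :=
          mul_le_mul_of_nonneg_left hsum hrpos.le
      _ ≤ ‖x‖ ^ (1 + α₁ : ℝ) := hfinal
      _ ≤ max 1 (‖x‖ ^ (1 + α₁ : ℝ)) := le_max_right _ _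
end
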